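/- Let β > 2 and let f : ℂ → ℂ be square integrable with respect to the Gaussian measure dμ(w) = (1/π) exp(−|w|²) dA(w). Then (1/π) ∫_ℂ |B(f)(z)|² · exp(−β|z|²) dA(z) ≤ (1/(β−2)) · ‖f‖²_{L²(ℂ,dμ)}, where B(f)(z) = (1/π) ∫_ℂ exp(−|z−w|²) f(w) dA(w) is the Berezin transform of f. In particular B is a bounded operator from L²(ℂ,dμ) into the weighted Gaussian L² space of parameter β. -/

import Mathlib

open Complex MeasureTheory

/-- The Gaussian measure `dμ(w) = (1/π)·exp(−|w|²) dA(w)` on `ℂ`. -/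
noncomputable def gaussianMeasure : Measure ℂ :=
  volume.withDensity fun w => ENNReal.ofReal (Real.exp (-‖w‖ ^ 2) / Real.pi)

/-- The Berezin transform `B(f)(z) = (1/π)∫_ℂ exp(−|z−w|²) f(w) dA(w)`. -/
noncomputable def berezin (f : ℂ → ℂ) (z : ℂ) : ℂ :=
  (1 / (Real.pi : ℂ)) * ∫ w : ℂ, Complex.exp (-((‖z - w‖ : ℂ) ^ 2)) * f w

open scoped ENNReal NNReal

lemma normsq_complex (z : ℂ) : ‖z‖ ^ 2 = z.re ^ 2 + z.im ^ 2 := by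
  rw [Complex.sq_norm, Complex.normSq_apply]; ring

lemma gauss_integrable {a : ℝ} (ha : 0 < a) :
    Integrable (fun z : ℂ => Real.exp (-(a * ‖z‖ ^ 2))) := by
  have h1 : Integrable (fun p : ℝ × ℝ => Real.exp (-(a * p.1 ^ 2)) * Real.exp (-(a * p.2 ^ 2))) :=
    by simpa [neg_mul, Measure.volume_eq_prod] using (integrable_exp_neg_mul_sq ha).mul_prod (integrable_exp_neg_mul_sq ha)
  have h2 := (Complex.volume_preserving_equiv_real_prod.integrable_comp_emb
    Complex.measurableEquivRealProd.measurableEmbedding).2 h1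
  refine h2.congr (Filter.Eventually.of_forall fun z => ?_)
  simp only [Function.comp, Complex.measurableEquivRealProd_apply]
  rw [← Real.exp_add, normsq_complex]
  ring_nf

lemma gauss_integral {a : ℝ} (ha : 0 < a) :
    ∫ z : ℂ, Real.exp (-(a * ‖z‖ ^ 2)) = Real.pi / a := by
  have h1 : (∫ z : ℂ, Real.exp (-(a * ‖z‖ ^ 2)))
      = ∫ p : ℝ × ℝ, Real.exp (-(a * p.1 ^ 2)) * Real.exp (-(a * p.2 ^ 2)) := by
    rw [← Complex.volume_preserving_equiv_real_prod.integral_comp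
      Complex.measurableEquivRealProd.measurableEmbedding]
    congr 1; funext z
    simp only [Complex.measurableEquivRealProd_apply]
    rw [← Real.exp_add, normsq_complex]; ring_nf
  have h3 := integral_prod_mul (μ := (volume : Measure ℝ)) (ν := (volume : Measure ℝ))
    (fun x : ℝ => Real.exp (-(a * x ^ 2))) (fun y : ℝ => Real.exp (-(a * y ^ 2)))
  rw [h1, Measure.volume_eq_prod, h3]
  have h2 := integral_gaussian a
  simp only [neg_mul] at h2
  rw [h2, Real.mul_self_sqrt (div_nonneg Real.pi_pos.le ha.le)]

lemma gauss_lintegral {a : ℝ} (ha : 0 < a) (c : ℂ) :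
    ∫⁻ z : ℂ, ENNReal.ofReal (Real.exp (-(a * ‖z - c‖ ^ 2))) = ENNReal.ofReal (Real.pi / a) := by
  have h0 : ∀ z : ℂ, z - c = z + (-c) := fun z => sub_eq_add_neg z c
  simp_rw [h0]
  rw [lintegral_add_right_eq_self (fun z : ℂ => ENNReal.ofReal (Real.exp (-(a * ‖z‖ ^ 2)))) (-c)]
  rw [← ofReal_integral_eq_lintegral_ofReal (gauss_integrable ha)
    (Filter.Eventually.of_forall fun z => (Real.exp_pos _).le), gauss_integral ha]

lemma complete_sq {s : ℝ} (hs : 1 - s ≠ 0) (z w : ℂ) :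
    -‖z - w‖ ^ 2 + s * ‖w‖ ^ 2
      = -((1 - s) * ‖w - ((1 - s)⁻¹ : ℝ) * z‖ ^ 2) + s / (1 - s) * ‖z‖ ^ 2 := by
  simp only [normsq_complex, Complex.sub_re, Complex.sub_im, Complex.mul_re, Complex.mul_im,
    Complex.ofReal_re, Complex.ofReal_im]
  field_simp
  ring

lemma lintegral_cauchy_schwarz {α : Type*} [MeasurableSpace α] {μ : Measure α}
    {f g : α → ℝ≥0∞} (hf : AEMeasurable f μ) (hg : AEMeasurable g μ) :
    (∫⁻ a, f a * g a ∂μ) ^ 2 ≤ (∫⁻ a, f a ^ 2 ∂μ) * (∫⁻ a, g a ^ 2 ∂μ) := by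
  have h := ENNReal.lintegral_mul_le_Lp_mul_Lq μ (p := 2) (q := 2)
    Real.HolderConjugate.two_two hf hg
  simp only [Pi.mul_apply] at h
  have h2 : ∀ F : α → ℝ≥0∞, (∫⁻ a, F a ^ (2:ℝ) ∂μ) = ∫⁻ a, F a ^ 2 ∂μ := by
    intro F
    congr 1; funext a
    rw [← ENNReal.rpow_natCast (F a) 2]; norm_num
  rw [h2, h2] at h
  calc (∫⁻ a, f a * g a ∂μ) ^ 2
      ≤ ((∫⁻ a, f a ^ 2 ∂μ) ^ (1/(2:ℝ)) * (∫⁻ a, g a ^ 2 ∂μ) ^ (1/(2:ℝ))) ^ 2 :=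
        pow_le_pow_left₀ (zero_le) h 2
    _ = (∫⁻ a, f a ^ 2 ∂μ) * (∫⁻ a, g a ^ 2 ∂μ) := by
        rw [mul_pow, ← ENNReal.rpow_natCast (_ ^ (1/(2:ℝ))) 2,
          ← ENNReal.rpow_natCast (_ ^ (1/(2:ℝ))) 2, ← ENNReal.rpow_mul, ← ENNReal.rpow_mul]
        norm_num

noncomputable def E (x : ℝ) : ℝ≥0∞ := ENNReal.ofReal (Real.exp x)

lemma E_mul (x y : ℝ) : E x * E y = E (x + y) := by
  rw [E, E, E, ← ENNReal.ofReal_mul (Real.exp_pos x).le, ← Real.exp_add]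

lemma E_sq (x : ℝ) : E x ^ 2 = E (2 * x) := by
  rw [pow_two, E_mul]; congr 1; ring

lemma E_ne_top (x : ℝ) : E x ≠ ∞ := ENNReal.ofReal_ne_top

lemma measurable_E_comp {α : Type*} [MeasurableSpace α] {φ : α → ℝ} (hφ : Measurable φ) :
    Measurable fun x => E (φ x) :=
  ENNReal.measurable_ofReal.comp (Real.measurable_exp.comp hφ)

lemma gauss_lintegralE {a : ℝ} (ha : 0 < a) (c : ℂ) :
    ∫⁻ z : ℂ, E (-(a * ‖z - c‖ ^ 2)) = ENNReal.ofReal (Real.pi / a) := gauss_lintegral ha c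

set_option maxHeartbeats 1000000 in
/-- For `β > 2` and `f` square integrable for the Gaussian measure
`dμ(w) = (1/π)exp(−|w|²)dA(w)`, the Berezin transform satisfies
`(1/π)∫_ℂ |B(f)(z)|²·exp(−β|z|²) dA(z) ≤ (1/(β−2))·‖f‖²_{L²(ℂ,dμ)}`;
in particular `B` is bounded from `L²(ℂ,dμ)` into the weighted Gaussian `L²`
space of parameter `β`. -/
theorem berezin_bounded_into_weighted_L2 (β : ℝ) (hβ : 2 < β)
    (f : ℂ → ℂ) (hf : MemLp f 2 gaussianMeasure) :
    (1 / Real.pi) * ∫ z : ℂ, ‖berezin f z‖ ^ 2 * Real.exp (-β * ‖z‖ ^ 2)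
      ≤ (1 / (β - 2)) * ∫ w : ℂ, ‖f w‖ ^ 2 ∂gaussianMeasure := by
  have hπ : (0:ℝ) < Real.pi := Real.pi_pos
  -- numeric facts
  have hβ2 : (0:ℝ) < β - 2 := by linarith
  obtain ⟨t, s, c, ht0, ht2, h1s0, h1c, hsc, hexps, hconst⟩ :
      ∃ t s c : ℝ, 0 ≤ t ∧ t ≤ 1 / (β - 2) ∧ 0 < 1 - s ∧ 0 < 1 + c
        ∧ s / (1 - s) - β = -c ∧ s + c / (1 + c) = 1
        ∧ (1 / Real.pi) ^ 2 * (Real.pi / (1 - s)) * (Real.pi / (1 + c)) = t := by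
    have hD : (0:ℝ) ≤ β ^ 2 - 4 := by nlinarith
    obtain ⟨t, htdef⟩ : ∃ t' : ℝ, t' = (β - Real.sqrt (β ^ 2 - 4)) / 2 := ⟨_, rfl⟩
    have hsq : Real.sqrt (β ^ 2 - 4) ^ 2 = β ^ 2 - 4 := Real.sq_sqrt hD
    have hsnn : 0 ≤ Real.sqrt (β ^ 2 - 4) := Real.sqrt_nonneg _
    have hslt : Real.sqrt (β ^ 2 - 4) < β := by
      nlinarith [sq_nonneg (Real.sqrt (β ^ 2 - 4) - β)]
    have ht0 : 0 < t := by rw [htdef]; linarith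
    have hβ2lt : β - 2 < Real.sqrt (β ^ 2 - 4) := by
      refine (Real.lt_sqrt (by linarith)).mpr ?_
      nlinarith
    have ht1 : t < 1 := by rw [htdef]; linarith
    have htβ : t * β = t ^ 2 + 1 := by
      rw [htdef]; linear_combination (-(1:ℝ)/4) * hsq
    have htle : t * (β - 2) ≤ 1 := by nlinarith
    have h1t : (0:ℝ) < 1 + t := by linarith
    have htc : t * (β - t) = 1 := by nlinarith
    have hβt : (0:ℝ) < 1 + (β - t) := by linarith
    refine ⟨t, t / (1 + t), β - t, ht0.le, ?_, ?_, by linarith, ?_, ?_, ?_⟩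
    · rw [le_div_iff₀ hβ2]; exact htle
    · have : t / (1 + t) < 1 := by rw [div_lt_one h1t]; linarith
      linarith
    · have hsd : t / (1 + t) / (1 - t / (1 + t)) = t := by field_simp; ring
      rw [hsd]; ring
    · field_simp
      linear_combination htc
    · have h1s : 1 - t / (1 + t) = 1 / (1 + t) := by field_simp; ring
      rw [h1s]
      have hπ' : Real.pi ≠ 0 := hπ.ne'
      field_simp
      linear_combination -htc
  -- measurable representative
  have hd_meas : Measurable fun w : ℂ => ENNReal.ofReal (Real.exp (-‖w‖ ^ 2) / Real.pi) := by
    fun_prop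
  have hac1 : gaussianMeasure ≪ volume := withDensity_absolutelyContinuous _ _
  have hac2 : (volume : Measure ℂ) ≪ gaussianMeasure :=
    withDensity_absolutelyContinuous' hd_meas.aemeasurable
      (Filter.Eventually.of_forall fun w => (ENNReal.ofReal_pos.mpr (by positivity)).ne')
  have hfv : AEStronglyMeasurable f volume := hf.1.mono_ac hac2
  obtain ⟨g, hg, hfg⟩ : ∃ g, StronglyMeasurable g ∧ f =ᵐ[volume] g :=
    ⟨hfv.mk f, hfv.stronglyMeasurable_mk, hfv.ae_eq_mk⟩
  have hBfg : ∀ z, berezin f z = berezin g z := by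
    intro z
    unfold berezin
    congr 1
    exact integral_congr_ae (hfg.mono fun w hw => by simp only [hw])
  set N : ℂ → ℝ≥0∞ := fun w => (‖g w‖₊ : ℝ≥0∞) with hNdef
  have hN : Measurable N := hg.measurable.nnnorm.coe_nnreal_ennreal
  -- pointwise bound on the Berezin transform
  have hA : ∀ z : ℂ, (‖berezin g z‖₊ : ℝ≥0∞)
      ≤ ENNReal.ofReal (1 / Real.pi) * ∫⁻ w, E (-‖z - w‖ ^ 2) * N w := by
    intro z
    have h2 : (‖(1 / (Real.pi : ℂ))‖₊ : ℝ≥0∞) = ENNReal.ofReal (1 / Real.pi) := by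
      rw [← enorm_eq_nnnorm, ← ofReal_norm]
      congr 1
      rw [norm_div, norm_one, Complex.norm_real, Real.norm_eq_abs, abs_of_pos hπ]
    have h3 : ∀ w : ℂ, (‖Complex.exp (-((‖z - w‖ : ℂ) ^ 2)) * g w‖₊ : ℝ≥0∞)
        = E (-‖z - w‖ ^ 2) * N w := by
      intro w
      rw [nnnorm_mul, ENNReal.coe_mul]
      congr 1
      rw [← enorm_eq_nnnorm, ← ofReal_norm, E]
      congr 1
      rw [Complex.norm_exp]
      congr 1
      have h4 : -((‖z - w‖ : ℂ) ^ 2) = ((-‖z - w‖ ^ 2 : ℝ) : ℂ) := by push_cast; ring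
      rw [h4, Complex.ofReal_re]
    calc (‖berezin g z‖₊ : ℝ≥0∞)
        = (‖(1 / (Real.pi : ℂ))‖₊ : ℝ≥0∞)
          * (‖∫ w, Complex.exp (-((‖z - w‖ : ℂ) ^ 2)) * g w‖₊ : ℝ≥0∞) := by
          rw [berezin, nnnorm_mul, ENNReal.coe_mul]
      _ ≤ (‖(1 / (Real.pi : ℂ))‖₊ : ℝ≥0∞)
          * ∫⁻ w, (‖Complex.exp (-((‖z - w‖ : ℂ) ^ 2)) * g w‖₊ : ℝ≥0∞) :=
          mul_le_mul_right (enorm_integral_le_lintegral_enorm _) _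
      _ = ENNReal.ofReal (1 / Real.pi) * ∫⁻ w, E (-‖z - w‖ ^ 2) * N w := by
          rw [h2]; congr 1; exact lintegral_congr h3
  -- Cauchy-Schwarz
  have hCS : ∀ z : ℂ, (∫⁻ w, E (-‖z - w‖ ^ 2) * N w) ^ 2
      ≤ (∫⁻ w, E (-‖z - w‖ ^ 2 + s * ‖w‖ ^ 2))
        * (∫⁻ w, E (-‖z - w‖ ^ 2 - s * ‖w‖ ^ 2) * N w ^ 2) := by
    intro z
    have hsplit : ∀ w, E (-‖z - w‖ ^ 2) * N w
        = E ((-‖z - w‖ ^ 2 + s * ‖w‖ ^ 2) / 2)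
          * (E ((-‖z - w‖ ^ 2 - s * ‖w‖ ^ 2) / 2) * N w) := by
      intro w
      rw [← mul_assoc, E_mul]
      congr 2
      ring
    have h := lintegral_cauchy_schwarz (μ := (volume : Measure ℂ))
      (f := fun w => E ((-‖z - w‖ ^ 2 + s * ‖w‖ ^ 2) / 2))
      (g := fun w => E ((-‖z - w‖ ^ 2 - s * ‖w‖ ^ 2) / 2) * N w)
      (measurable_E_comp (by fun_prop)).aemeasurable
      ((measurable_E_comp (by fun_prop)).mul hN).aemeasurable
    rw [lintegral_congr hsplit]
    refine h.trans (le_of_eq ?_)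
    congr 1
    · refine lintegral_congr fun w => ?_
      rw [E_sq]
      congr 1
      ring
    · refine lintegral_congr fun w => ?_
      rw [mul_pow, E_sq]
      congr 2
      ring
  -- Gaussian evaluations
  have key1 : ∀ z : ℂ, (∫⁻ w, E (-‖z - w‖ ^ 2 + s * ‖w‖ ^ 2))
      = ENNReal.ofReal (Real.pi / (1 - s)) * E (s / (1 - s) * ‖z‖ ^ 2) := by
    intro z
    have hrw : ∀ w : ℂ, E (-‖z - w‖ ^ 2 + s * ‖w‖ ^ 2)
        = E (-((1 - s) * ‖w - ((1 - s)⁻¹ : ℝ) * z‖ ^ 2)) * E (s / (1 - s) * ‖z‖ ^ 2) := by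
      intro w
      rw [complete_sq h1s0.ne' z w, ← E_mul]
    simp_rw [hrw]
    rw [lintegral_mul_const' _ _ (E_ne_top _), gauss_lintegralE h1s0, mul_comm]
  have key2 : ∀ w : ℂ, (∫⁻ z, E (-‖z - w‖ ^ 2 - c * ‖z‖ ^ 2))
      = ENNReal.ofReal (Real.pi / (1 + c)) * E (-(c / (1 + c)) * ‖w‖ ^ 2) := by
    intro w
    have hrw : ∀ z : ℂ, E (-‖z - w‖ ^ 2 - c * ‖z‖ ^ 2)
        = E (-((1 + c) * ‖z - ((1 + c)⁻¹ : ℝ) * w‖ ^ 2)) * E (-(c / (1 + c)) * ‖w‖ ^ 2) := by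
      intro z
      have h := complete_sq (s := -c) (by intro hcon; rw [sub_neg_eq_add] at hcon; linarith) w z
      rw [norm_sub_rev w z] at h
      simp only [sub_neg_eq_add] at h
      rw [E_mul]
      congr 1
      linear_combination h
    simp_rw [hrw]
    rw [lintegral_mul_const' _ _ (E_ne_top _), gauss_lintegralE h1c, mul_comm]
  -- step 1: pointwise bound
  set C1 : ℝ≥0∞ := ENNReal.ofReal (1 / Real.pi) ^ 2 * ENNReal.ofReal (Real.pi / (1 - s)) with hC1
  have hC1ne : C1 ≠ ∞ :=
    ENNReal.mul_ne_top (ENNReal.pow_ne_top ENNReal.ofReal_ne_top) ENNReal.ofReal_ne_top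
  have step1 : ∀ z : ℂ, (‖berezin g z‖₊ : ℝ≥0∞) ^ 2 * E (-(β * ‖z‖ ^ 2))
      ≤ C1 * (E (-(c * ‖z‖ ^ 2)) * ∫⁻ w, E (-‖z - w‖ ^ 2 - s * ‖w‖ ^ 2) * N w ^ 2) := by
    intro z
    have h1 : (‖berezin g z‖₊ : ℝ≥0∞) ^ 2
        ≤ ENNReal.ofReal (1 / Real.pi) ^ 2 * (∫⁻ w, E (-‖z - w‖ ^ 2) * N w) ^ 2 := by
      rw [← mul_pow]
      exact pow_le_pow_left₀ (zero_le) (hA z) 2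
    have h2 : (‖berezin g z‖₊ : ℝ≥0∞) ^ 2 * E (-(β * ‖z‖ ^ 2))
        ≤ ENNReal.ofReal (1 / Real.pi) ^ 2 *
          ((∫⁻ w, E (-‖z - w‖ ^ 2 + s * ‖w‖ ^ 2)) *
            (∫⁻ w, E (-‖z - w‖ ^ 2 - s * ‖w‖ ^ 2) * N w ^ 2)) * E (-(β * ‖z‖ ^ 2)) :=
      mul_le_mul' (h1.trans (mul_le_mul_right (hCS z) _)) le_rfl
    refine h2.trans (le_of_eq ?_)
    rw [key1 z]
    have h3 : E (s / (1 - s) * ‖z‖ ^ 2) * E (-(β * ‖z‖ ^ 2)) = E (-(c * ‖z‖ ^ 2)) := by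
      rw [E_mul]
      congr 1
      linear_combination (‖z‖ ^ 2) * hsc
    rw [hC1, ← h3]
    ring
  -- step 2: integrate
  have step2 : (∫⁻ z, (‖berezin g z‖₊ : ℝ≥0∞) ^ 2 * E (-(β * ‖z‖ ^ 2)))
      ≤ C1 * ∫⁻ z, E (-(c * ‖z‖ ^ 2)) * ∫⁻ w, E (-‖z - w‖ ^ 2 - s * ‖w‖ ^ 2) * N w ^ 2 :=
    (lintegral_mono step1).trans_eq (lintegral_const_mul' _ _ hC1ne)
  -- step 3: Tonelli and inner Gaussian integral
  have hprod : AEMeasurable (fun p : ℂ × ℂ =>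
      E (-(c * ‖p.1‖ ^ 2)) * (E (-‖p.1 - p.2‖ ^ 2 - s * ‖p.2‖ ^ 2) * N p.2 ^ 2))
      ((volume : Measure ℂ).prod volume) :=
    ((measurable_E_comp (by fun_prop)).mul ((measurable_E_comp (by fun_prop)).mul
      ((hN.comp measurable_snd).pow_const 2))).aemeasurable
  have step3 : (∫⁻ z, E (-(c * ‖z‖ ^ 2)) * ∫⁻ w, E (-‖z - w‖ ^ 2 - s * ‖w‖ ^ 2) * N w ^ 2)
      = ENNReal.ofReal (Real.pi / (1 + c)) * ∫⁻ w, N w ^ 2 * E (-‖w‖ ^ 2) := by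
    have h0 : ∀ z : ℂ, E (-(c * ‖z‖ ^ 2)) * ∫⁻ w, E (-‖z - w‖ ^ 2 - s * ‖w‖ ^ 2) * N w ^ 2
        = ∫⁻ w, E (-(c * ‖z‖ ^ 2)) * (E (-‖z - w‖ ^ 2 - s * ‖w‖ ^ 2) * N w ^ 2) :=
      fun z => (lintegral_const_mul' _ _ (E_ne_top _)).symm
    rw [lintegral_congr h0, lintegral_lintegral_swap hprod]
    have h1 : ∀ w : ℂ, (∫⁻ z, E (-(c * ‖z‖ ^ 2)) * (E (-‖z - w‖ ^ 2 - s * ‖w‖ ^ 2) * N w ^ 2))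
        = N w ^ 2 * E (-‖w‖ ^ 2) * ENNReal.ofReal (Real.pi / (1 + c)) := by
      intro w
      have hptr : ∀ z : ℂ, E (-(c * ‖z‖ ^ 2)) * (E (-‖z - w‖ ^ 2 - s * ‖w‖ ^ 2) * N w ^ 2)
          = N w ^ 2 * E (-(s * ‖w‖ ^ 2)) * E (-‖z - w‖ ^ 2 - c * ‖z‖ ^ 2) := by
        intro z
        have hE : E (-(c * ‖z‖ ^ 2)) * E (-‖z - w‖ ^ 2 - s * ‖w‖ ^ 2)
            = E (-(s * ‖w‖ ^ 2)) * E (-‖z - w‖ ^ 2 - c * ‖z‖ ^ 2) := by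
          rw [E_mul, E_mul]
          congr 1
          ring
        calc E (-(c * ‖z‖ ^ 2)) * (E (-‖z - w‖ ^ 2 - s * ‖w‖ ^ 2) * N w ^ 2)
            = E (-(c * ‖z‖ ^ 2)) * E (-‖z - w‖ ^ 2 - s * ‖w‖ ^ 2) * N w ^ 2 := by ring
          _ = E (-(s * ‖w‖ ^ 2)) * E (-‖z - w‖ ^ 2 - c * ‖z‖ ^ 2) * N w ^ 2 := by rw [hE]
          _ = N w ^ 2 * E (-(s * ‖w‖ ^ 2)) * E (-‖z - w‖ ^ 2 - c * ‖z‖ ^ 2) := by ring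
      rw [lintegral_congr hptr,
        lintegral_const_mul' _ _
          (ENNReal.mul_ne_top (ENNReal.pow_ne_top ENNReal.coe_ne_top) (E_ne_top _)),
        key2 w]
      have hE2 : E (-(s * ‖w‖ ^ 2)) * E (-(c / (1 + c)) * ‖w‖ ^ 2) = E (-‖w‖ ^ 2) := by
        rw [E_mul]
        congr 1
        linear_combination (-(‖w‖ ^ 2)) * hexps
      calc N w ^ 2 * E (-(s * ‖w‖ ^ 2))
            * (ENNReal.ofReal (Real.pi / (1 + c)) * E (-(c / (1 + c)) * ‖w‖ ^ 2))
          = N w ^ 2 * (E (-(s * ‖w‖ ^ 2)) * E (-(c / (1 + c)) * ‖w‖ ^ 2))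
            * ENNReal.ofReal (Real.pi / (1 + c)) := by ring
        _ = N w ^ 2 * E (-‖w‖ ^ 2) * ENNReal.ofReal (Real.pi / (1 + c)) := by rw [hE2]
    rw [lintegral_congr h1, lintegral_mul_const' _ _ ENNReal.ofReal_ne_top, mul_comm]
  -- step 4: back to the Gaussian measure
  have step4 : (∫⁻ w, N w ^ 2 * E (-‖w‖ ^ 2))
      = ENNReal.ofReal Real.pi * ∫⁻ w, N w ^ 2 ∂gaussianMeasure := by
    have h0 : ∀ w : ℂ, N w ^ 2 * E (-‖w‖ ^ 2)
        = ENNReal.ofReal Real.pi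
          * (ENNReal.ofReal (Real.exp (-‖w‖ ^ 2) / Real.pi) * N w ^ 2) := by
      intro w
      have hx : ENNReal.ofReal (Real.exp (-‖w‖ ^ 2))
          = ENNReal.ofReal Real.pi * ENNReal.ofReal (Real.exp (-‖w‖ ^ 2) / Real.pi) := by
        rw [← ENNReal.ofReal_mul hπ.le]
        congr 1
        field_simp
      rw [E, hx]
      ring
    rw [lintegral_congr h0, lintegral_const_mul' _ _ ENNReal.ofReal_ne_top]
    congr 1
    rw [gaussianMeasure, lintegral_withDensity_eq_lintegral_mul volume hd_meas (hN.pow_const 2)]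
    rfl
  -- combine
  have hmain : (∫⁻ z, (‖berezin g z‖₊ : ℝ≥0∞) ^ 2 * E (-(β * ‖z‖ ^ 2)))
      ≤ ENNReal.ofReal t * (ENNReal.ofReal Real.pi * ∫⁻ w, N w ^ 2 ∂gaussianMeasure) := by
    refine step2.trans (le_of_eq ?_)
    rw [step3, step4]
    have hc1 : C1 * ENNReal.ofReal (Real.pi / (1 + c)) = ENNReal.ofReal t := by
      rw [hC1, ← ENNReal.ofReal_pow (by positivity), ← ENNReal.ofReal_mul (by positivity),
        ← ENNReal.ofReal_mul (by positivity), hconst]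
    calc C1 * (ENNReal.ofReal (Real.pi / (1 + c))
          * (ENNReal.ofReal Real.pi * ∫⁻ w, N w ^ 2 ∂gaussianMeasure))
        = C1 * ENNReal.ofReal (Real.pi / (1 + c))
          * (ENNReal.ofReal Real.pi * ∫⁻ w, N w ^ 2 ∂gaussianMeasure) := by ring
      _ = ENNReal.ofReal t * (ENNReal.ofReal Real.pi * ∫⁻ w, N w ^ 2 ∂gaussianMeasure) := by
          rw [hc1]
  -- finiteness of the right-hand side
  have hfgμ : f =ᵐ[gaussianMeasure] g := hac1.ae_le hfg
  have hT_eq : (∫⁻ w, N w ^ 2 ∂gaussianMeasure)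
      = ∫⁻ w, ((‖f w‖₊ : ℝ≥0∞)) ^ 2 ∂gaussianMeasure :=
    lintegral_congr_ae (hfgμ.mono fun w hw => by simp only [hNdef, hw])
  have hT_ne : (∫⁻ w, N w ^ 2 ∂gaussianMeasure) ≠ ∞ := by
    rw [hT_eq]
    have h2 := hf.2
    rw [eLpNorm_eq_lintegral_rpow_enorm_toReal (by norm_num) (by norm_num)] at h2
    simp only [enorm_eq_nnnorm] at h2
    have h3 : ∀ a : ℂ, (‖f a‖₊ : ℝ≥0∞) ^ (2 : ℝ≥0∞).toReal = (‖f a‖₊ : ℝ≥0∞) ^ 2 := by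
      intro a
      rw [ENNReal.toReal_ofNat, ← ENNReal.rpow_natCast]
      norm_num
    simp_rw [h3] at h2
    intro hcon
    rw [hcon, ENNReal.toReal_ofNat, ENNReal.top_rpow_of_pos (by norm_num)] at h2
    exact lt_irrefl _ h2
  -- measurability of berezin g
  have hker : Continuous fun p : ℂ × ℂ => Complex.exp (-((‖p.1 - p.2‖ : ℂ) ^ 2)) := by
    fun_prop
  have hBg : StronglyMeasurable (berezin g) := by
    have hFm : StronglyMeasurable fun p : ℂ × ℂ =>
        Complex.exp (-((‖p.1 - p.2‖ : ℂ) ^ 2)) * g p.2 :=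
      hker.stronglyMeasurable.mul (hg.comp_measurable measurable_snd)
    have hint : StronglyMeasurable fun z : ℂ => ∫ w, Complex.exp (-((‖z - w‖ : ℂ) ^ 2)) * g w :=
      hFm.integral_prod_right'
    exact stronglyMeasurable_const.mul hint
  -- convert both sides
  have hLHS : (∫ z : ℂ, ‖berezin f z‖ ^ 2 * Real.exp (-β * ‖z‖ ^ 2))
      = (∫⁻ z, (‖berezin g z‖₊ : ℝ≥0∞) ^ 2 * E (-(β * ‖z‖ ^ 2))).toReal := by
    have heq : (fun z : ℂ => ‖berezin f z‖ ^ 2 * Real.exp (-β * ‖z‖ ^ 2))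
        = fun z : ℂ => ‖berezin g z‖ ^ 2 * Real.exp (-β * ‖z‖ ^ 2) := by
      funext z
      rw [hBfg z]
    rw [heq, integral_eq_lintegral_of_nonneg_ae
      (Filter.Eventually.of_forall fun z => by positivity)
      (show AEStronglyMeasurable (fun z : ℂ => ‖berezin g z‖ ^ 2 * Real.exp (-β * ‖z‖ ^ 2)) volume from
        ((hBg.measurable.norm.pow_const 2).mul
        (show Measurable fun z : ℂ => Real.exp (-β * ‖z‖ ^ 2) by fun_prop)).aestronglyMeasurable)]
    congr 1
    refine lintegral_congr fun z => ?_
    rw [ENNReal.ofReal_mul (by positivity), ENNReal.ofReal_pow (norm_nonneg _),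
      ofReal_norm, enorm_eq_nnnorm, E, neg_mul]
  have hRHS : (∫ w : ℂ, ‖f w‖ ^ 2 ∂gaussianMeasure)
      = (∫⁻ w, N w ^ 2 ∂gaussianMeasure).toReal := by
    have hfm2 : AEStronglyMeasurable (fun w => ‖f w‖ ^ 2) gaussianMeasure :=
      (hf.1.norm.mul hf.1.norm).congr
        (Filter.Eventually.of_forall fun w => (pow_two ‖f w‖).symm)
    rw [integral_eq_lintegral_of_nonneg_ae
      (Filter.Eventually.of_forall fun w => by positivity) hfm2]
    rw [hT_eq]
    congr 1
    refine lintegral_congr fun w => ?_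
    rw [ENNReal.ofReal_pow (norm_nonneg _), ofReal_norm, enorm_eq_nnnorm]
  rw [hLHS, hRHS]
  have hfin : ENNReal.ofReal t
      * (ENNReal.ofReal Real.pi * ∫⁻ w, N w ^ 2 ∂gaussianMeasure) ≠ ∞ :=
    ENNReal.mul_ne_top ENNReal.ofReal_ne_top
      (ENNReal.mul_ne_top ENNReal.ofReal_ne_top hT_ne)
  have h5 := ENNReal.toReal_mono hfin hmain
  rw [ENNReal.toReal_mul, ENNReal.toReal_mul, ENNReal.toReal_ofReal ht0,
    ENNReal.toReal_ofReal hπ.le] at h5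
  have hTnn : (0:ℝ) ≤ (∫⁻ w, N w ^ 2 ∂gaussianMeasure).toReal := ENNReal.toReal_nonneg
  calc (1 / Real.pi) * (∫⁻ z, (‖berezin g z‖₊ : ℝ≥0∞) ^ 2 * E (-(β * ‖z‖ ^ 2))).toReal
      ≤ (1 / Real.pi) * (t * (Real.pi * (∫⁻ w, N w ^ 2 ∂gaussianMeasure).toReal)) :=
        mul_le_mul_of_nonneg_left h5 (by positivity)
    _ = t * (∫⁻ w, N w ^ 2 ∂gaussianMeasure).toReal := by
        field_simp
    _ ≤ (1 / (β - 2)) * (∫⁻ w, N w ^ 2 ∂gaussianMeasure).toReal :=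
        mul_le_mul_of_nonneg_right ht2 hTnn
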